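/- Let Y be a locally convex topological vector space and K ⊂ Y a closed convex cone with nonempty algebraic core. Then there exists a sublinear functional p : Y → ℝ that is K-monotone (p(y₁) ≥ p(y₂) whenever y₁ - y₂ ∈ K) and satisfies p(x) ≤ 0 for all x ∈ -K and p(y) > 0 for all y ∉ -K. -/

import Mathlib

/-- The algebraic core of a set. -/
def algCore {E : Type*} [AddCommMonoid E] [Module ℝ E] (A : Set E) : Set E :=
  {a ∈ A | ∀ v : E, ∃ δ : ℝ, 0 < δ ∧ ∀ ζ : ℝ, 0 ≤ ζ → ζ ≤ δ → a + ζ • v ∈ A}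

/-- A sublinear functional: positively homogeneous and subadditive. -/
def Sublinear {E : Type*} [AddCommMonoid E] [Module ℝ E] (p : E → ℝ) : Prop :=
  (∀ l : ℝ, 0 ≤ l → ∀ x, p (l • x) = l * p x) ∧ ∀ x y, p (x + y) ≤ p x + p y

/-- in a locally convex space, if `K` is a closed convex cone with nonempty
algebraic core, then there is a `K`-monotone sublinear functional `p` with
`p ≤ 0` on `-K` and `p > 0` off `-K`. -/
theorem exists_monotone_sublinear_separating {Y : Type*} [AddCommGroup Y] [Module ℝ Y]
    [TopologicalSpace Y] [IsTopologicalAddGroup Y] [ContinuousSMul ℝ Y]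
    [LocallyConvexSpace ℝ Y]
    (K : Set Y) (hKcone : ∀ r : ℝ, 0 ≤ r → ∀ x ∈ K, r • x ∈ K)
    (hKconv : Convex ℝ K) (hKcl : IsClosed K) (hcore : (algCore K).Nonempty) :
    ∃ p : Y → ℝ, Sublinear p ∧
      (∀ y₁ y₂ : Y, y₁ - y₂ ∈ K → p y₂ ≤ p y₁) ∧
      (∀ x ∈ -K, p x ≤ 0) ∧ (∀ y ∉ (-K : Set Y), 0 < p y) := by
  classical
  by_cases hY : ∀ z : Y, z ∈ K
  · refine ⟨fun _ => 0, ⟨fun l _ x => by ring, fun x y => by norm_num⟩,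
      fun _ _ _ => le_rfl, fun _ _ => le_rfl, fun y hy => absurd ?_ hy⟩
    exact Set.mem_neg.2 (hY (-y))
  push_neg at hY
  obtain ⟨z₀, hz₀⟩ := hY
  obtain ⟨k₀, hk₀K, hk₀core⟩ := hcore
  -- K is closed under addition
  have hadd : ∀ a ∈ K, ∀ b ∈ K, a + b ∈ K := by
    intro a ha b hb
    have hmid : (1/2:ℝ) • a + (1/2:ℝ) • b ∈ K :=
      hKconv ha hb (by norm_num) (by norm_num) (by norm_num)
    have h2 := hKcone 2 (by norm_num) _ hmid
    have : (2:ℝ) • ((1/2 : ℝ) • a + (1/2 : ℝ) • b) = a + b := by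
      rw [smul_add, smul_smul, smul_smul]; norm_num
    rwa [this] at h2
  have h0K : (0 : Y) ∈ K := by
    have := hKcone 0 le_rfl _ hk₀K
    rwa [zero_smul] at this
  set S : Y → Set ℝ := fun y => {t : ℝ | t • k₀ - y ∈ K} with hS
  -- nonemptiness
  have hSne : ∀ y, (S y).Nonempty := by
    intro y
    obtain ⟨δ, hδ, h⟩ := hk₀core (-y)
    refine ⟨δ⁻¹, ?_⟩
    have hmem := h δ hδ.le le_rfl
    have := hKcone δ⁻¹ (by positivity) _ hmem
    have heq : δ⁻¹ • (k₀ + δ • (-y)) = δ⁻¹ • k₀ - y := by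
      rw [smul_add, smul_smul, inv_mul_cancel₀ hδ.ne', one_smul]; abel
    rwa [heq] at this
  -- -k₀ ∉ K
  have hnk : -k₀ ∉ K := by
    intro hneg
    apply hz₀
    obtain ⟨δ, hδ, h⟩ := hk₀core z₀
    have hmem := h δ hδ.le le_rfl
    have h1 := hKcone δ⁻¹ (by positivity) _ hmem
    have heq : δ⁻¹ • (k₀ + δ • z₀) = δ⁻¹ • k₀ + z₀ := by
      rw [smul_add, smul_smul, inv_mul_cancel₀ hδ.ne', one_smul]
    rw [heq] at h1
    have h2 := hKcone δ⁻¹ (by positivity) _ hneg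
    have := hadd _ h1 _ h2
    have heq2 : δ⁻¹ • k₀ + z₀ + δ⁻¹ • (-k₀) = z₀ := by
      rw [smul_neg]; abel
    rwa [heq2] at this
  -- bounded below
  have hbdd : ∀ y, BddBelow (S y) := by
    intro y
    obtain ⟨s', hs'⟩ := hSne (-y)
    refine ⟨-s', fun s hs => ?_⟩
    by_contra hlt
    push_neg at hlt
    apply hnk
    have hsum := hadd _ hs _ hs'
    have heq : s • k₀ - y + (s' • k₀ - -y) = (s + s') • k₀ := by
      rw [add_smul]; abel
    rw [heq] at hsum
    have hss : s + s' < 0 := by linarith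
    have := hKcone (-(s+s')⁻¹) (neg_nonneg.2 (inv_nonpos.2 hss.le)) _ hsum
    have heq2 : (-(s+s')⁻¹) • ((s+s') • k₀) = -k₀ := by
      rw [smul_smul, neg_mul, inv_mul_cancel₀ hss.ne, neg_one_smul]
    rwa [heq2] at this
  set p : Y → ℝ := fun y => sInf (S y) with hp
  have hple : ∀ y, ∀ t ∈ S y, p y ≤ t := fun y t ht => csInf_le (hbdd y) ht
  have hlep : ∀ y b, (∀ t ∈ S y, b ≤ t) → b ≤ p y := fun y b h => le_csInf (hSne y) h
  -- upward closedness
  have hup : ∀ y, ∀ t ∈ S y, ∀ s, t ≤ s → s ∈ S y := by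
    intro y t ht s hts
    have h1 := hKcone (s - t) (by linarith) _ hk₀K
    have := hadd _ ht _ h1
    have heq : t • k₀ - y + (s - t) • k₀ = s • k₀ - y := by
      rw [sub_smul]; abel
    rwa [heq] at this
  -- p 0 = 0
  have hp0 : p 0 = 0 := by
    apply le_antisymm
    · refine hple 0 0 ?_
      show (0:ℝ) • k₀ - 0 ∈ K
      rw [zero_smul, sub_zero]; exact h0K
    · refine hlep 0 0 ?_
      intro t ht
      by_contra hlt
      push_neg at hlt
      apply hnk
      have ht' : t • k₀ ∈ K := by
        have : t • k₀ - 0 ∈ K := ht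
        rwa [sub_zero] at this
      have := hKcone (-t⁻¹) (neg_nonneg.2 (inv_nonpos.2 hlt.le)) _ ht'
      have heq : (-t⁻¹) • (t • k₀) = -k₀ := by
        rw [smul_smul, neg_mul, inv_mul_cancel₀ hlt.ne, neg_one_smul]
      rwa [heq] at this
  refine ⟨p, ⟨?_, ?_⟩, ?_, ?_, ?_⟩
  · -- positive homogeneity
    intro l hl x
    rcases eq_or_lt_of_le hl with rfl | hl
    · rw [zero_smul, zero_mul, hp0]
    · apply le_antisymm
      · rw [← div_le_iff₀' hl]
        refine hlep x _ ?_
        intro t ht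
        rw [div_le_iff₀' hl]
        refine hple _ _ ?_
        show (l * t) • k₀ - l • x ∈ K
        have := hKcone l hl.le _ ht
        have heq : l • (t • k₀ - x) = (l * t) • k₀ - l • x := by
          rw [smul_sub, smul_smul]
        rwa [heq] at this
      · refine hlep (l • x) _ ?_
        intro t ht
        rw [mul_comm, ← le_div_iff₀ hl]
        refine hple _ _ ?_
        show (t / l) • k₀ - x ∈ K
        have := hKcone l⁻¹ (by positivity) _ ht
        have heq : l⁻¹ • (t • k₀ - l • x) = (t / l) • k₀ - x := by
          rw [smul_sub, smul_smul, smul_smul, inv_mul_cancel₀ hl.ne', one_smul,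
            div_eq_inv_mul]
        rwa [heq] at this
  · -- subadditivity
    intro x y
    have key : ∀ t ∈ S x, p (x + y) - t ≤ p y := by
      intro t ht
      refine hlep y _ ?_
      intro s hs
      rw [sub_le_iff_le_add]
      refine hple _ _ ?_
      show (s + t) • k₀ - (x + y) ∈ K
      have := hadd _ ht _ hs
      have heq : t • k₀ - x + (s • k₀ - y) = (s + t) • k₀ - (x + y) := by
        rw [add_smul]; abel
      rwa [heq] at this
    have : ∀ t ∈ S x, p (x + y) - p y ≤ t := fun t ht => by
      have := key t ht; linarith
    have := hlep x _ this
    linarith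
  · -- monotone
    intro y₁ y₂ h12
    refine csInf_le_csInf (hbdd y₂) (hSne y₁) ?_
    intro t ht
    have := hadd _ ht _ h12
    have heq : t • k₀ - y₁ + (y₁ - y₂) = t • k₀ - y₂ := by abel
    rw [heq] at this
    exact this
  · -- p ≤ 0 on -K
    intro x hx
    have hmx : -x ∈ K := Set.mem_neg.1 hx
    have h1 : (0:Y) - x ∈ K := by rwa [zero_sub]
    calc p x ≤ p 0 := by
          refine csInf_le_csInf (hbdd x) (hSne 0) ?_
          intro t ht
          have := hadd _ ht _ h1
          have heq : t • k₀ - 0 + (0 - x) = t • k₀ - x := by abel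
          rw [heq] at this
          exact this
      _ = 0 := hp0
  · -- strict positivity off -K
    intro y hy
    by_contra hle
    push_neg at hle
    apply hy
    have hall : ∀ ε : ℝ, 0 < ε → ε • k₀ - y ∈ K := by
      intro ε hε
      obtain ⟨t, ht, htε⟩ := exists_lt_of_csInf_lt (hSne y) (lt_of_le_of_lt hle hε)
      exact hup y t ht ε htε.le
    have hcont : Continuous (fun ε : ℝ => ε • k₀ - y) :=
      (continuous_id.smul continuous_const).sub continuous_const
    have htend : Filter.Tendsto (fun ε : ℝ => ε • k₀ - y) (nhdsWithin 0 (Set.Ioi 0)) (nhds (-y)) := by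
      have h1 : Filter.Tendsto (fun ε : ℝ => ε • k₀ - y) (nhdsWithin 0 (Set.Ioi 0))
          (nhds ((0:ℝ) • k₀ - y)) :=
        (hcont.tendsto 0).mono_left nhdsWithin_le_nhds
      simpa using h1
    have hmem : -y ∈ K := by
      refine hKcl.mem_of_tendsto htend ?_
      filter_upwards [self_mem_nhdsWithin] with ε hε
      exact hall ε hε
    exact Set.mem_neg.2 hmem
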